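/- Let n ∈ ℕ and c₁, c₂ ∈ [0,1). (i) For a smooth function f : ℝ² → ℝ, the diffeomorphism F_f of ℝ³ defined by F_f(x,y,z) = (x + f(y,z), y, z) normalizes the group Γ_{n,c₁,c₂} if and only if f(y+p, z+q) − f(y,z) ∈ ℤ for every (p,q) ∈ ℤ² and every (y,z) ∈ ℝ². (ii) The diffeomorphism F of ℝ³ defined by F(x,y,z) = (x − c₁y − c₂z, y, z) satisfies F·Γ_{n,c₁,c₂}·F⁻¹ = Γ_{n,0,0}. -/

import Mathlib

noncomputable section

/-- The bijection `(x,y,z) ↦ (x + φ(y,z), y + ψ(z), z + b)` of `ℝ³`. -/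
def affMap (φ : ℝ × ℝ → ℝ) (ψ : ℝ → ℝ) (b : ℝ) : Equiv.Perm (ℝ × ℝ × ℝ) where
  toFun p := (p.1 + φ p.2, p.2.1 + ψ p.2.2, p.2.2 + b)
  invFun p := (p.1 - φ (p.2.1 - ψ (p.2.2 - b), p.2.2 - b), p.2.1 - ψ (p.2.2 - b), p.2.2 - b)
  left_inv := by rintro ⟨x, y, z⟩; simp
  right_inv := by rintro ⟨x, y, z⟩; simp

/-- The group `Γ_{n,c₁,c₂}`, generated by `(x,y,z) ↦ (x+1,y,z)`,
`(x,y,z) ↦ (x+c₁,y+1,z)` and `(x,y,z) ↦ (x+ny+c₂,y,z+1)`. -/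
def Gamma (n : ℕ) (c₁ c₂ : ℝ) : Subgroup (Equiv.Perm (ℝ × ℝ × ℝ)) :=
  Subgroup.closure
    { affMap (fun _ => 1) (fun _ => 0) 0,
      affMap (fun _ => c₁) (fun _ => 1) 0,
      affMap (fun q => n * q.1 + c₂) (fun _ => 0) 1 }

lemma affMap_apply (φ : ℝ × ℝ → ℝ) (ψ : ℝ → ℝ) (b : ℝ) (p : ℝ × ℝ × ℝ) :
    affMap φ ψ b p = (p.1 + φ p.2, p.2.1 + ψ p.2.2, p.2.2 + b) := rfl

lemma affMap_congr {φ φ' : ℝ × ℝ → ℝ} {ψ ψ' : ℝ → ℝ} {b b' : ℝ}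
    (h1 : ∀ w, φ w = φ' w) (h2 : ∀ z, ψ z = ψ' z) (h3 : b = b') :
    affMap φ ψ b = affMap φ' ψ' b' := by
  obtain rfl : φ = φ' := funext h1
  obtain rfl : ψ = ψ' := funext h2
  obtain rfl : b = b' := h3
  rfl

lemma affMap_eq {φ φ' : ℝ × ℝ → ℝ} {ψ ψ' : ℝ → ℝ} {b b' : ℝ}
    (h : affMap φ ψ b = affMap φ' ψ' b') :
    (∀ w, φ w = φ' w) ∧ (∀ z, ψ z = ψ' z) ∧ b = b' := by
  have key : ∀ x (w : ℝ × ℝ), affMap φ ψ b (x, w) = affMap φ' ψ' b' (x, w) := by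
    rw [h]; intros; rfl
  refine ⟨fun w => ?_, fun z => ?_, ?_⟩
  · have := key 0 w; simp [affMap_apply, Prod.ext_iff] at this; exact this.1
  · have := key 0 (0, z); simp [affMap_apply, Prod.ext_iff] at this; exact this.2.1
  · have := key 0 (0, 0); simp [affMap_apply, Prod.ext_iff] at this; exact this.2.2

lemma affMap_mul (φ φ' : ℝ × ℝ → ℝ) (ψ ψ' : ℝ → ℝ) (b b' : ℝ) :
    affMap φ ψ b * affMap φ' ψ' b' =
      affMap (fun w => φ' w + φ (w.1 + ψ' w.2, w.2 + b'))
        (fun z => ψ' z + ψ (z + b')) (b' + b) := by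
  apply Equiv.ext
  rintro ⟨x, y, z⟩
  simp [affMap_apply, Equiv.Perm.mul_apply, add_assoc]

lemma affMap_one : affMap (fun _ => 0) (fun _ => 0) 0 = 1 := by
  apply Equiv.ext
  rintro ⟨x, y, z⟩
  simp [affMap_apply]

lemma affMap_inv (g : ℝ × ℝ → ℝ) :
    (affMap g (fun _ => 0) 0)⁻¹ = affMap (fun w => -g w) (fun _ => 0) 0 := by
  symm
  apply eq_inv_of_mul_eq_one_left
  rw [affMap_mul, ← affMap_one]
  apply affMap_congr
  · intro w; simp
  · intro z; simp
  · simp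

lemma conj_affMap (g φ : ℝ × ℝ → ℝ) (ψ : ℝ → ℝ) (b : ℝ) :
    affMap g (fun _ => 0) 0 * affMap φ ψ b * (affMap g (fun _ => 0) 0)⁻¹ =
      affMap (fun w => φ w + g (w.1 + ψ w.2, w.2 + b) - g w) ψ b := by
  rw [affMap_inv, mul_assoc, affMap_mul, affMap_mul]
  apply affMap_congr
  · intro w; simp; ring
  · intro z; simp
  · simp

def expl (n : ℕ) (c₁ c₂ : ℝ) (m p q : ℤ) : Equiv.Perm (ℝ × ℝ × ℝ) :=
  affMap (fun w => q * n * w.1 + q * c₂ + p * c₁ + m) (fun _ => p) q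

lemma expl_mul (n : ℕ) (c₁ c₂ : ℝ) (m₁ p₁ q₁ m₂ p₂ q₂ : ℤ) :
    expl n c₁ c₂ m₁ p₁ q₁ * expl n c₁ c₂ m₂ p₂ q₂ =
      expl n c₁ c₂ (m₁ + m₂ + q₁ * n * p₂) (p₁ + p₂) (q₁ + q₂) := by
  rw [expl, expl, expl, affMap_mul]
  apply affMap_congr
  · intro w; push_cast; ring
  · intro z; push_cast; ring
  · push_cast; ring

lemma expl_one (n : ℕ) (c₁ c₂ : ℝ) : expl n c₁ c₂ 0 0 0 = 1 := by
  rw [expl, ← affMap_one]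
  apply affMap_congr
  · intro w; simp
  · intro z; simp
  · simp

lemma expl_inv (n : ℕ) (c₁ c₂ : ℝ) (m p q : ℤ) :
    (expl n c₁ c₂ m p q)⁻¹ = expl n c₁ c₂ (-m + q * n * p) (-p) (-q) := by
  symm
  apply eq_inv_of_mul_eq_one_left
  rw [expl_mul]
  rw [show (-m + q * n * p) + m + -q * n * p = 0 by ring,
    show -p + p = 0 by ring, show -q + q = 0 by ring]
  exact expl_one n c₁ c₂

lemma expl_a_zpow (n : ℕ) (c₁ c₂ : ℝ) (m : ℤ) :
    expl n c₁ c₂ 1 0 0 ^ m = expl n c₁ c₂ m 0 0 := by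
  induction m using Int.induction_on with
  | zero => rw [zpow_zero, expl_one]
  | succ k ih => rw [zpow_add_one, ih, expl_mul]; norm_num
  | pred k ih => rw [zpow_sub_one, ih, expl_inv, expl_mul]; norm_num [sub_eq_add_neg]

lemma expl_b_zpow (n : ℕ) (c₁ c₂ : ℝ) (p : ℤ) :
    expl n c₁ c₂ 0 1 0 ^ p = expl n c₁ c₂ 0 p 0 := by
  induction p using Int.induction_on with
  | zero => rw [zpow_zero, expl_one]
  | succ k ih => rw [zpow_add_one, ih, expl_mul]; norm_num
  | pred k ih => rw [zpow_sub_one, ih, expl_inv, expl_mul]; norm_num [sub_eq_add_neg]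

lemma expl_c_zpow (n : ℕ) (c₁ c₂ : ℝ) (q : ℤ) :
    expl n c₁ c₂ 0 0 1 ^ q = expl n c₁ c₂ 0 0 q := by
  induction q using Int.induction_on with
  | zero => rw [zpow_zero, expl_one]
  | succ k ih => rw [zpow_add_one, ih, expl_mul]; norm_num
  | pred k ih => rw [zpow_sub_one, ih, expl_inv, expl_mul]; norm_num [sub_eq_add_neg]

def GammaExpl (n : ℕ) (c₁ c₂ : ℝ) : Subgroup (Equiv.Perm (ℝ × ℝ × ℝ)) where
  carrier := {g | ∃ m p q : ℤ, g = expl n c₁ c₂ m p q}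
  one_mem' := ⟨0, 0, 0, (expl_one n c₁ c₂).symm⟩
  mul_mem' := by
    rintro a b ⟨m₁, p₁, q₁, rfl⟩ ⟨m₂, p₂, q₂, rfl⟩
    exact ⟨_, _, _, expl_mul n c₁ c₂ m₁ p₁ q₁ m₂ p₂ q₂⟩
  inv_mem' := by
    rintro a ⟨m, p, q, rfl⟩
    exact ⟨_, _, _, expl_inv n c₁ c₂ m p q⟩

lemma mem_GammaExpl {n : ℕ} {c₁ c₂ : ℝ} {g : Equiv.Perm (ℝ × ℝ × ℝ)} :
    g ∈ GammaExpl n c₁ c₂ ↔ ∃ m p q : ℤ, g = expl n c₁ c₂ m p q := Iff.rfl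

lemma gen_a (n : ℕ) (c₁ c₂ : ℝ) :
    affMap (fun _ => (1:ℝ)) (fun _ => 0) 0 = expl n c₁ c₂ 1 0 0 := by
  rw [expl]; apply affMap_congr
  · intro w; push_cast; ring
  · intro z; push_cast; ring
  · push_cast; ring

lemma gen_b (n : ℕ) (c₁ c₂ : ℝ) :
    affMap (fun _ => c₁) (fun _ => (1:ℝ)) 0 = expl n c₁ c₂ 0 1 0 := by
  rw [expl]; apply affMap_congr
  · intro w; push_cast; ring
  · intro z; push_cast; ring
  · push_cast; ring

lemma gen_c (n : ℕ) (c₁ c₂ : ℝ) :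
    affMap (fun w => (n : ℝ) * w.1 + c₂) (fun _ => 0) (1:ℝ) = expl n c₁ c₂ 0 0 1 := by
  rw [expl]; apply affMap_congr
  · intro w; push_cast; ring
  · intro z; push_cast; ring
  · push_cast; ring

lemma Gamma_eq (n : ℕ) (c₁ c₂ : ℝ) : Gamma n c₁ c₂ = GammaExpl n c₁ c₂ := by
  apply le_antisymm
  · rw [Gamma, Subgroup.closure_le]
    rintro g hg
    simp only [Set.mem_insert_iff, Set.mem_singleton_iff] at hg
    rcases hg with rfl | rfl | rfl
    · exact ⟨1, 0, 0, gen_a n c₁ c₂⟩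
    · exact ⟨0, 1, 0, gen_b n c₁ c₂⟩
    · exact ⟨0, 0, 1, gen_c n c₁ c₂⟩
  · rintro g ⟨m, p, q, rfl⟩
    have ha : expl n c₁ c₂ 1 0 0 ∈ Gamma n c₁ c₂ := by
      rw [← gen_a]; exact Subgroup.subset_closure (by left; rfl)
    have hb : expl n c₁ c₂ 0 1 0 ∈ Gamma n c₁ c₂ := by
      rw [← gen_b]; exact Subgroup.subset_closure (by right; left; rfl)
    have hc : expl n c₁ c₂ 0 0 1 ∈ Gamma n c₁ c₂ := by
      rw [← gen_c]; exact Subgroup.subset_closure (by right; right; rfl)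
    have key : expl n c₁ c₂ m p q =
        expl n c₁ c₂ 1 0 0 ^ m * expl n c₁ c₂ 0 1 0 ^ p * expl n c₁ c₂ 0 0 1 ^ q := by
      rw [expl_a_zpow, expl_b_zpow, expl_c_zpow, expl_mul, expl_mul]; norm_num
    rw [key]
    exact mul_mem (mul_mem (zpow_mem ha m) (zpow_mem hb p)) (zpow_mem hc q)

lemma conj_expl (n : ℕ) (c₁ c₂ : ℝ) (g : ℝ × ℝ → ℝ) (m p q : ℤ) :
    affMap g (fun _ => 0) 0 * expl n c₁ c₂ m p q * (affMap g (fun _ => 0) 0)⁻¹ =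
      affMap (fun w => (q * n * w.1 + q * c₂ + p * c₁ + m) + g (w.1 + p, w.2 + q) - g w)
        (fun _ => (p : ℝ)) (q : ℝ) := by
  rw [expl, conj_affMap]

lemma int_steps {g : ℝ → ℝ} {M : ℝ} (h : ∀ t, g (t + 1) - g t = M) :
    ∀ (p : ℤ) (t : ℝ), g (t + p) - g t = p * M := by
  intro p
  induction p using Int.induction_on with
  | zero => intro t; simp
  | succ k ih =>
    intro t
    have h1 := h (t + k)
    have h2 := ih t
    push_cast
    rw [show t + ((k : ℝ) + 1) = t + k + 1 by ring]
    push_cast at h2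
    linarith
  | pred k ih =>
    intro t
    have h1 := h (t + (-(k : ℝ) - 1))
    have h2 := ih t
    push_cast
    push_cast at h2
    rw [show t + (-(k : ℝ) - 1) + 1 = t + -(k : ℝ) by ring] at h1
    linarith

lemma const_of_int (f : ℝ × ℝ → ℝ) (hf : Continuous f) (p q : ℤ)
    (H : ∀ y z : ℝ, ∃ m : ℤ, f (y + p, z + q) - f (y, z) = m) :
    ∃ m : ℤ, ∀ y z : ℝ, f (y + p, z + q) - f (y, z) = m := by
  obtain ⟨m₀, hm₀⟩ := H 0 0
  set δ : ℝ × ℝ → ℝ := fun w => f (w.1 + p, w.2 + q) - f w with hδdef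
  have hδ : Continuous δ := (hf.comp (by continuity)).sub hf
  have hset : δ ⁻¹' {(m₀ : ℝ)} = δ ⁻¹' (Metric.ball (m₀ : ℝ) 1) := by
    ext w
    simp only [Set.mem_preimage, Set.mem_singleton_iff, Metric.mem_ball]
    constructor
    · intro h; rw [h]; simp
    · intro h
      obtain ⟨m, hm⟩ := H w.1 w.2
      have hδw : δ w = m := hm
      rw [hδw, Real.dist_eq] at h
      have h2 : |m - m₀| < 1 := by exact_mod_cast h
      rw [abs_lt] at h2
      have h3 : m = m₀ := by omega
      rw [hδw, h3]
  have hclopen : IsClopen (δ ⁻¹' {(m₀ : ℝ)}) :=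
    ⟨isClosed_singleton.preimage hδ, by rw [hset]; exact Metric.isOpen_ball.preimage hδ⟩
  have huniv : δ ⁻¹' {(m₀ : ℝ)} = Set.univ := by
    rcases isClopen_iff.mp hclopen with h | h
    · exfalso
      have : ((0 : ℝ), (0 : ℝ)) ∈ δ ⁻¹' {(m₀ : ℝ)} := hm₀
      rw [h] at this
      exact this
    · exact h
  exact ⟨m₀, fun y z => Set.eq_univ_iff_forall.mp huniv (y, z)⟩

theorem stmt_8 (n : ℕ) (c₁ c₂ : ℝ)
    (hc₁ : c₁ ∈ Set.Ico (0 : ℝ) 1) (hc₂ : c₂ ∈ Set.Ico (0 : ℝ) 1) :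
    (∀ f : ℝ × ℝ → ℝ, ContDiff ℝ (⊤ : ℕ∞) f →
      (affMap f (fun _ => 0) 0 ∈ Subgroup.normalizer (Gamma n c₁ c₂ : Set (Equiv.Perm (ℝ × ℝ × ℝ))) ↔
        ∀ (p q : ℤ) (y z : ℝ), ∃ m : ℤ, f (y + p, z + q) - f (y, z) = m)) ∧
    Subgroup.map
      (MulAut.conj (affMap (fun w => -(c₁ * w.1) - c₂ * w.2) (fun _ => 0) 0)).toMonoidHom
      (Gamma n c₁ c₂) = Gamma n 0 0 := by
  constructor
  · intro f hf
    constructor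
    · -- forward direction
      intro hmem p q y z
      rw [Subgroup.mem_normalizer_iff] at hmem
      have hM1 : ∃ M : ℤ, ∀ y z : ℝ, f (y + 1, z) - f (y, z) = (M : ℝ) := by
        have hb : expl n c₁ c₂ 0 1 0 ∈ Gamma n c₁ c₂ := by
          rw [Gamma_eq]; exact ⟨0, 1, 0, rfl⟩
        have h1 := (hmem _).mp hb
        rw [Gamma_eq] at h1
        obtain ⟨m', p', q', he⟩ := h1
        rw [conj_expl, expl] at he
        obtain ⟨hφ, hψ, hbb⟩ := affMap_eq he
        have hq' : q' = 0 := by exact_mod_cast hbb.symm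
        have hp' : p' = 1 := by exact_mod_cast (hψ 0).symm
        refine ⟨m', fun y z => ?_⟩
        have h := hφ (y, z)
        rw [hq', hp'] at h
        simp only [Int.cast_zero, Int.cast_one, zero_mul, one_mul, add_zero, zero_add] at h
        linarith
      have hM2 : ∃ M : ℤ, ∀ y z : ℝ, f (y, z + 1) - f (y, z) = (M : ℝ) := by
        have hc : expl n c₁ c₂ 0 0 1 ∈ Gamma n c₁ c₂ := by
          rw [Gamma_eq]; exact ⟨0, 0, 1, rfl⟩
        have h1 := (hmem _).mp hc
        rw [Gamma_eq] at h1
        obtain ⟨m', p', q', he⟩ := h1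
        rw [conj_expl, expl] at he
        obtain ⟨hφ, hψ, hbb⟩ := affMap_eq he
        have hq' : q' = 1 := by exact_mod_cast hbb.symm
        have hp' : p' = 0 := by exact_mod_cast (hψ 0).symm
        refine ⟨m', fun y z => ?_⟩
        have h := hφ (y, z)
        rw [hq', hp'] at h
        simp only [Int.cast_zero, Int.cast_one, zero_mul, one_mul, add_zero, zero_add] at h
        linarith
      obtain ⟨M₁, hM1⟩ := hM1
      obtain ⟨M₂, hM2⟩ := hM2
      have e1 : f (y + (p : ℝ), z) - f (y, z) = (p : ℝ) * M₁ :=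
        int_steps (g := fun t => f (t, z)) (fun t => hM1 t z) p y
      have e2 : f (y + (p : ℝ), z + (q : ℝ)) - f (y + (p : ℝ), z) = (q : ℝ) * M₂ :=
        int_steps (g := fun t => f (y + (p : ℝ), t)) (fun t => hM2 (y + (p : ℝ)) t) q z
      exact ⟨p * M₁ + q * M₂, by push_cast; linarith⟩
    · -- reverse direction
      intro H
      have hconst : ∀ p q : ℤ, ∃ m : ℤ, ∀ y z : ℝ, f (y + p, z + q) - f (y, z) = m :=
        fun p q => const_of_int f hf.continuous p q (fun y z => H p q y z)
      rw [Subgroup.mem_normalizer_iff]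
      have main : ∀ (g : ℝ × ℝ → ℝ),
          (∀ p q : ℤ, ∃ m : ℤ, ∀ y z : ℝ, g (y + p, z + q) - g (y, z) = m) →
          ∀ h ∈ Gamma n c₁ c₂,
            affMap g (fun _ => 0) 0 * h * (affMap g (fun _ => 0) 0)⁻¹ ∈ Gamma n c₁ c₂ := by
        intro g hg h hh
        rw [Gamma_eq] at hh ⊢
        obtain ⟨m, p, q, rfl⟩ := hh
        obtain ⟨m₀, hm₀⟩ := hg p q
        refine ⟨m + m₀, p, q, ?_⟩
        rw [conj_expl, expl]
        apply affMap_congr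
        · intro w
          have h5 : g (w.1 + (p : ℝ), w.2 + (q : ℝ)) - g w = (m₀ : ℝ) := hm₀ w.1 w.2
          push_cast
          linarith
        · intro z; rfl
        · rfl
      intro h
      constructor
      · intro hh; exact main f hconst h hh
      · intro hh
        have hconst' : ∀ p q : ℤ, ∃ m : ℤ, ∀ y z : ℝ,
            (fun w => -f w) (y + (p : ℝ), z + (q : ℝ)) - (fun w => -f w) (y, z) = (m : ℝ) := by
          intro p q
          obtain ⟨m₀, hm₀⟩ := hconst p q
          refine ⟨-m₀, fun y z => ?_⟩
          have := hm₀ y z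
          push_cast
          linarith
        have h2 := main (fun w => -f w) hconst' _ hh
        rw [← affMap_inv] at h2
        have h3 : (affMap f (fun _ => 0) 0)⁻¹ *
            (affMap f (fun _ => 0) 0 * h * (affMap f (fun _ => 0) 0)⁻¹) *
            ((affMap f (fun _ => 0) 0)⁻¹)⁻¹ = h := by group
        rwa [h3] at h2
  · -- part (ii)
    rw [Gamma_eq n c₁ c₂, Gamma_eq n 0 0]
    ext g
    simp only [Subgroup.mem_map, MulEquiv.coe_toMonoidHom, MulAut.conj_apply]
    constructor
    · rintro ⟨h, hh, rfl⟩
      rw [mem_GammaExpl] at hh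
      obtain ⟨m, p, q, rfl⟩ := hh
      rw [mem_GammaExpl]
      refine ⟨m, p, q, ?_⟩
      rw [conj_expl, expl]
      apply affMap_congr
      · intro w; push_cast; ring
      · intro z; rfl
      · rfl
    · intro hg
      rw [mem_GammaExpl] at hg
      obtain ⟨m, p, q, rfl⟩ := hg
      refine ⟨expl n c₁ c₂ m p q, mem_GammaExpl.mpr ⟨m, p, q, rfl⟩, ?_⟩
      rw [conj_expl, expl]
      apply affMap_congr
      · intro w; push_cast; ring
      · intro z; rfl
      · rfl
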